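/- Let H ≤ G be groups with G/H ℓ-divisible. Then δ_ℓ(G/H) ≤ 1 + (|H| − 1)/(ℓ − 1). More precisely, the number of witnessing subgroups needed is at most one more than the number of distinct subgroups of H of order ℓ. -/

import Mathlib

def LDiv (ℓ : ℕ) {G : Type*} [Group G] (H : Subgroup G) (δ : ℕ) : Prop :=
  ∃ Gs : Fin δ → Subgroup G,
    (∀ i, H ≤ Gs i) ∧
    ∀ σ : G, σ ∉ H → orderOf σ = ℓ →
      ∃ i : Fin δ, ∃ τ : G, IsConj σ τ ∧ τ ∈ Gs i ∧
        ∀ π ∈ Gs i, π * τ * π⁻¹ ∉ H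

section Aux

variable {G : Type*} [Group G]

lemma aux_eq_of_le_of_card_eq {K' K : Subgroup G} [Finite K] (hle : K' ≤ K)
    (hcard : Nat.card K' = Nat.card K) : K' = K := by
  have e := Subgroup.subgroupOfEquivOfLe hle
  have hc : Nat.card (K'.subgroupOf K) = Nat.card K := by
    rw [Nat.card_congr e.toEquiv, hcard]
  exact le_antisymm hle (Subgroup.subgroupOf_eq_top.mp (Subgroup.eq_top_of_card_eq _ hc))

lemma aux_finite {ℓ : ℕ} (hℓ : ℓ.Prime) {K : Subgroup G} (hK : Nat.card K = ℓ) :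
    Finite K :=
  (Nat.card_pos_iff.mp (by rw [hK]; exact hℓ.pos)).2

/-- A subgroup of prime order is the zpowers of any element of full order in it. -/
lemma aux_zpowers_eq {ℓ : ℕ} (hℓ : ℓ.Prime) {K : Subgroup G} (hK : Nat.card K = ℓ)
    {x : G} (hx : x ∈ K) (hox : orderOf x = ℓ) : K = Subgroup.zpowers x := by
  have : Finite K := aux_finite hℓ hK
  refine (aux_eq_of_le_of_card_eq (Subgroup.zpowers_le.mpr hx) ?_).symm
  rw [Nat.card_zpowers, hox, hK]

/-- Conjugation preserves order. -/
lemma aux_orderOf_conj (π x : G) : orderOf (π * x * π⁻¹) = orderOf x :=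
  (SemiconjBy.orderOf_eq π (by unfold SemiconjBy; group)).symm

/-- An element of a subgroup of prime order `ℓ` has order `1` or `ℓ`, and
there exists one of order `ℓ`. -/
lemma aux_exists_order {ℓ : ℕ} (hℓ : ℓ.Prime) {K : Subgroup G} (hK : Nat.card K = ℓ) :
    ∃ x ∈ K, orderOf x = ℓ := by
  have : Finite K := aux_finite hℓ hK
  have hnt : Nontrivial K := by
    rw [← Finite.one_lt_card_iff_nontrivial, hK]; exact hℓ.one_lt
  obtain ⟨y, hy⟩ := exists_ne (1 : K)
  refine ⟨(y : G), y.2, ?_⟩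
  have hdvd : orderOf (y : G) ∣ ℓ := by
    rw [← hK, Subgroup.orderOf_coe]; exact orderOf_dvd_natCard y
  rcases (Nat.dvd_prime hℓ).mp hdvd with h1 | h
  · exfalso; apply hy
    have : (y : G) = 1 := orderOf_eq_one_iff.mp h1
    exact Subtype.ext this
  · exact h

/-- If an element of `K` (of prime order `ℓ`) has order `ℓ`, and `x` is a power
generator, then membership gives a coprime natural exponent. -/
lemma aux_pow_rep {ℓ : ℕ} (hℓ : ℓ.Prime) {x h : G} (hox : orderOf x = ℓ)
    (hmem : h ∈ Subgroup.zpowers x) (hoh : orderOf h = ℓ) :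
    ∃ a : ℕ, a.Coprime ℓ ∧ x ^ a = h := by
  obtain ⟨k, hk⟩ := Subgroup.mem_zpowers_iff.mp hmem
  have hℓ0 : (0:ℤ) < (ℓ : ℤ) := by exact_mod_cast hℓ.pos
  set a : ℕ := (k % (ℓ : ℤ)).toNat with ha
  have hka : x ^ a = h := by
    rw [← hk, ← zpow_natCast, ha, Int.toNat_of_nonneg (Int.emod_nonneg _ (by omega))]
    rw [← hox]; exact zpow_mod_orderOf x k
  refine ⟨a, ?_, hka⟩
  have hord : orderOf (x ^ a) = ℓ := by rw [hka, hoh]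
  have ha0 : a ≠ 0 := by
    intro h0
    rw [h0, pow_zero] at hka
    rw [← hka, orderOf_one] at hoh
    have := hℓ.one_lt; omega
  rw [orderOf_pow' x ha0, hox] at hord
  have hdvd : Nat.gcd ℓ a ∣ ℓ := Nat.gcd_dvd_left _ _
  rcases (Nat.dvd_prime hℓ).mp hdvd with h1 | hh
  · exact Nat.coprime_comm.mp h1
  · rw [hh, Nat.div_self hℓ.pos] at hord
    have := hℓ.one_lt; omega

/-- Key step: the no-conjugate-in-`H` condition passes to coprime powers. -/
lemma aux_key {ℓ : ℕ} (hℓ : ℓ.Prime) {H G₁ : Subgroup G} (_hH : H ≤ G₁) {τ : G}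
    (hord : orderOf τ = ℓ) (hcl : ∀ π ∈ G₁, π * τ * π⁻¹ ∉ H)
    {n : ℕ} (hn : n.Coprime ℓ) : ∀ π ∈ G₁, π * τ ^ n * π⁻¹ ∉ H := by
  intro π hπ hmem
  have hσn : (π * τ * π⁻¹) ^ n ∈ H := by rwa [conj_pow]
  obtain ⟨m, -, hm⟩ := Nat.exists_mul_mod_eq_one_of_coprime hn hℓ.one_lt
  set σ := π * τ * π⁻¹ with hσ
  have hoσ : orderOf σ = ℓ := by rw [hσ, aux_orderOf_conj, hord]
  have : σ ^ (n * m) = σ ^ 1 := by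
    rw [pow_eq_pow_iff_modEq, hoσ]
    show n * m % ℓ = 1 % ℓ
    rw [hm, Nat.one_mod_eq_one.mpr (by have := hℓ.one_lt; omega)]
  have hσH : σ ∈ H := by
    rw [← pow_one σ, ← this, pow_mul]
    exact H.pow_mem hσn m
  exact hcl π hπ hσH

end Aux

section Aux2

variable {G : Type*} [Group G]

lemma aux_isConj_orderOf {x y : G} (h : IsConj x y) : orderOf x = orderOf y := by
  obtain ⟨c, hc⟩ := isConj_iff.mp h
  rw [← hc, aux_orderOf_conj]

lemma aux_isConj_pow {x y : G} (h : IsConj x y) (n : ℕ) : IsConj (x ^ n) (y ^ n) := by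
  obtain ⟨c, hc⟩ := isConj_iff.mp h
  exact isConj_iff.mpr ⟨c, by rw [← hc, conj_pow]⟩

lemma aux_finite_S (H : Subgroup G) [Finite H] (ℓ : ℕ) :
    Finite {K : Subgroup G // K ≤ H ∧ Nat.card K = ℓ} := by
  have hinj : Function.Injective
      (fun K : {K : Subgroup G // K ≤ H ∧ Nat.card K = ℓ} => {x : H | (x : G) ∈ K.1}) := by
    intro K K' heq
    have heq' : ∀ x : H, (x : G) ∈ K.1 ↔ (x : G) ∈ K'.1 := fun x => Set.ext_iff.mp heq x
    apply Subtype.ext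
    ext x
    constructor
    · intro hx; exact (heq' ⟨x, K.2.1 hx⟩).mp hx
    · intro hx; exact (heq' ⟨x, K'.2.1 hx⟩).mpr hx
  exact Finite.of_injective _ hinj

lemma aux_card_ne_one (H : Subgroup G) [Finite H] :
    Nat.card {x : H // x ≠ 1} = Nat.card H - 1 := by
  haveI := Fintype.ofFinite (↥H)
  classical
  rw [Nat.card_eq_fintype_card, Nat.card_eq_fintype_card]
  have := Fintype.card_subtype_compl (fun x : H => x = 1)
  rw [Fintype.card_subtype_eq (1 : H)] at this
  exact this

lemma aux_count {ℓ : ℕ} (hℓ : ℓ.Prime) (H : Subgroup G) [Finite H] :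
    Nat.card {K : Subgroup G // K ≤ H ∧ Nat.card K = ℓ} ≤ (Nat.card H - 1) / (ℓ - 1) := by
  haveI := aux_finite_S H ℓ
  set S := {K : Subgroup G // K ≤ H ∧ Nat.card K = ℓ} with hS
  have hg : ∀ K : S, ∃ x : G, x ∈ K.1 ∧ orderOf x = ℓ := fun K => by
    obtain ⟨x, hx, hox⟩ := aux_exists_order hℓ K.2.2; exact ⟨x, hx, hox⟩
  choose g hgmem hgord using hg
  have hlt : ∀ j : Fin (ℓ - 1), (j : ℕ) + 1 < ℓ := by
    intro j; have := j.2; have := hℓ.one_lt; omega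
  have hnd : ∀ j : Fin (ℓ - 1), ¬ ℓ ∣ ((j : ℕ) + 1) := by
    intro j hdvd
    have := Nat.le_of_dvd (by omega) hdvd
    have := hlt j; omega
  have hne1 : ∀ (K : S) (j : Fin (ℓ - 1)), g K ^ ((j : ℕ) + 1) ≠ 1 := by
    intro K j h1
    refine hnd j ?_
    have := orderOf_dvd_of_pow_eq_one h1
    rwa [hgord K] at this
  have hord : ∀ (K : S) (j : Fin (ℓ - 1)), orderOf (g K ^ ((j : ℕ) + 1)) = ℓ := by
    intro K j
    have hcop : (orderOf (g K)).Coprime ((j : ℕ) + 1) := by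
      rw [hgord K]; exact (Nat.Prime.coprime_iff_not_dvd hℓ).mpr (hnd j)
    rw [Nat.Coprime.orderOf_pow hcop, hgord K]
  have hzp : ∀ (K : S) (j : Fin (ℓ - 1)),
      K.1 = Subgroup.zpowers (g K ^ ((j : ℕ) + 1)) := by
    intro K j
    exact aux_zpowers_eq hℓ K.2.2 (K.1.pow_mem (hgmem K) _) (hord K j)
  set Φ : S × Fin (ℓ - 1) → {x : H // x ≠ 1} := fun p =>
    ⟨⟨g p.1 ^ ((p.2 : ℕ) + 1), p.1.2.1 (p.1.1.pow_mem (hgmem p.1) _)⟩,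
      fun hc => hne1 p.1 p.2 (by simpa using congrArg (fun z : H => (z : G)) hc)⟩ with hΦ
  have hΦinj : Function.Injective Φ := by
    rintro ⟨K, j⟩ ⟨K', j'⟩ heq
    have heqG : g K ^ ((j : ℕ) + 1) = g K' ^ ((j' : ℕ) + 1) := by
      have := congrArg (fun z : {x : H // x ≠ 1} => ((z : H) : G)) heq
      simpa [hΦ] using this
    have hKK' : K = K' := by
      apply Subtype.ext
      rw [hzp K j, heqG]
      exact (hzp K' j').symm
    cases hKK'
    have hjj' : ((j : ℕ) + 1) = ((j' : ℕ) + 1) := by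
      have hmod := pow_eq_pow_iff_modEq.mp heqG
      rw [hgord K] at hmod
      have h1 := hlt j; have h2 := hlt j'
      rwa [Nat.ModEq, Nat.mod_eq_of_lt h1, Nat.mod_eq_of_lt h2] at hmod
    have : j = j' := Fin.ext (by omega)
    rw [this]
  have hcard := Nat.card_le_card_of_injective Φ hΦinj
  rw [Nat.card_prod, aux_card_ne_one H] at hcard
  have hfl : Nat.card (Fin (ℓ - 1)) = ℓ - 1 := by simp
  rw [hfl] at hcard
  have hpos : 0 < ℓ - 1 := by have := hℓ.one_lt; omega
  exact (Nat.le_div_iff_mul_le hpos).mpr hcard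

end Aux2

section Main

variable {G : Type*} [Group G]

lemma aux_main {ℓ : ℕ} (hℓ : ℓ.Prime) (H : Subgroup G) [Finite H] {δ : ℕ}
    (h : LDiv ℓ H δ) :
    LDiv ℓ H (Nat.card {K : Subgroup G // K ≤ H ∧ Nat.card K = ℓ} + 1) := by
  obtain ⟨Gs, hGsH, hGs⟩ := h
  haveI : Finite {K : Subgroup G // K ≤ H ∧ Nat.card K = ℓ} := aux_finite_S H ℓ
  haveI := Fintype.ofFinite {K : Subgroup G // K ≤ H ∧ Nat.card K = ℓ}
  set S := {K : Subgroup G // K ≤ H ∧ Nat.card K = ℓ} with hS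
  -- For each K : S there is a single subgroup handling all σ conjugate into K
  have hF : ∀ K : S, ∃ G₁ : Subgroup G, H ≤ G₁ ∧ ∀ σ : G, σ ∉ H → orderOf σ = ℓ →
      (∃ h₀ ∈ K.1, IsConj σ h₀) →
      ∃ τ, IsConj σ τ ∧ τ ∈ G₁ ∧ ∀ π ∈ G₁, π * τ * π⁻¹ ∉ H := by
    intro K
    by_cases hP : ∃ σ₀ : G, σ₀ ∉ H ∧ orderOf σ₀ = ℓ ∧ ∃ h₀ ∈ K.1, IsConj σ₀ h₀
    · obtain ⟨σ₀, hσ₀H, hσ₀o, h₀, h₀K, hconj₀⟩ := hP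
      obtain ⟨i, τ₀, hcj, hτ₀mem, hcl⟩ := hGs σ₀ hσ₀H hσ₀o
      refine ⟨Gs i, hGsH i, ?_⟩
      rintro σ hσH hσo ⟨hh, hhK, hconj⟩
      have hoh₀ : orderOf h₀ = ℓ := by rw [← aux_isConj_orderOf hconj₀, hσ₀o]
      have hoh : orderOf hh = ℓ := by rw [← aux_isConj_orderOf hconj, hσo]
      have hKz : K.1 = Subgroup.zpowers h₀ := aux_zpowers_eq hℓ K.2.2 h₀K hoh₀
      rw [hKz] at hhK
      obtain ⟨a, hacop, hax⟩ := aux_pow_rep hℓ hoh₀ hhK hoh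
      have hoτ₀ : orderOf τ₀ = ℓ := by rw [← aux_isConj_orderOf hcj, hσ₀o]
      refine ⟨τ₀ ^ a, ?_, (Gs i).pow_mem hτ₀mem a, aux_key hℓ (hGsH i) hoτ₀ hcl hacop⟩
      -- σ ~ hh = h₀ ^ a ~ σ₀ ^ a ~ τ₀ ^ a
      have h1 : IsConj (h₀ ^ a) (τ₀ ^ a) :=
        ((aux_isConj_pow hconj₀ a).symm).trans (aux_isConj_pow hcj a)
      rw [← hax] at hconj
      exact hconj.trans h1
    · refine ⟨⊤, le_top, fun σ hσH hσo hc => absurd ⟨σ, hσH, hσo, hc⟩ hP⟩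
  choose F hF1 hF2 using hF
  set e := Fintype.equivFin S with he
  rw [Nat.card_eq_fintype_card]
  refine ⟨Fin.cases ⊤ (fun j => F (e.symm j)), ?_, ?_⟩
  · intro i
    induction i using Fin.cases with
    | zero => simp
    | succ j => simpa using hF1 (e.symm j)
  · intro σ hσH hσo
    by_cases hc : ∀ π : G, π * σ * π⁻¹ ∉ H
    · exact ⟨0, σ, IsConj.refl σ, by simp, fun π _ => hc π⟩
    · push_neg at hc
      obtain ⟨π, hπ⟩ := hc
      have hoh : orderOf (π * σ * π⁻¹) = ℓ := by rw [aux_orderOf_conj, hσo]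
      set K : S := ⟨Subgroup.zpowers (π * σ * π⁻¹), Subgroup.zpowers_le.mpr hπ,
        by rw [Nat.card_zpowers, hoh]⟩ with hK
      obtain ⟨τ, hconjτ, hmem, hcl⟩ := hF2 K σ hσH hσo
        ⟨π * σ * π⁻¹, Subgroup.mem_zpowers _, isConj_iff.mpr ⟨π, rfl⟩⟩
      refine ⟨(e K).succ, τ, hconjτ, ?_, ?_⟩
      · simpa using hmem
      · simpa using hcl

end Main

/-- If `G/H` is `ℓ`-divisible (`H` finite), then
`δ_ℓ(G/H) ≤ 1 + (|H| - 1)/(ℓ - 1)`; more precisely, `δ_ℓ(G/H)` is at most one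
more than the number of subgroups of `H` of order `ℓ`. -/
theorem stmt8 {G : Type*} [Group G] (ℓ : ℕ) (hℓ : ℓ.Prime)
    (H : Subgroup G) [Finite H] (hdiv : ∃ δ, LDiv ℓ H δ) :
    sInf {δ | LDiv ℓ H δ} ≤ 1 + (Nat.card H - 1) / (ℓ - 1) ∧
      sInf {δ | LDiv ℓ H δ} ≤
        1 + Nat.card {K : Subgroup G // K ≤ H ∧ Nat.card K = ℓ} := by
  obtain ⟨δ, hδ⟩ := hdiv
  have hmem : LDiv ℓ H (1 + Nat.card {K : Subgroup G // K ≤ H ∧ Nat.card K = ℓ}) := by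
    rw [Nat.add_comm]
    exact aux_main hℓ H hδ
  have h2 : sInf {δ | LDiv ℓ H δ} ≤
      1 + Nat.card {K : Subgroup G // K ≤ H ∧ Nat.card K = ℓ} := Nat.sInf_le hmem
  refine ⟨le_trans h2 ?_, h2⟩
  have := aux_count hℓ H
  omega
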